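/- Let π ∈ T_{n-1} and π̄ ∈ T_n be obtained by inserting n between positions k and k+1 (ldes(π) ≤ k ≤ n-1). Then Des(π̄⁻¹) = Des(π⁻¹) if π⁻¹(n-1) ≤ k, and Des(π̄⁻¹) = Des(π⁻¹) ∪ {n-1} if k < π⁻¹(n-1). -/

import Mathlib

open Finset

/-- A permutation is 321-avoiding if it has no decreasing subsequence of length 3. -/
def Avoids321 {n : ℕ} (π : Equiv.Perm (Fin n)) : Prop :=
  ¬ ∃ i j k : Fin n, i < j ∧ j < k ∧ π k < π j ∧ π j < π i

instance {n : ℕ} : DecidablePred (Avoids321 (n := n)) := fun π =>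
  decidable_of_iff (¬ ∃ i j k : Fin n, i < j ∧ j < k ∧ π k < π j ∧ π j < π i) Iff.rfl

/-- The set `T_n` of 321-avoiding permutations of order `n`. -/
def Tset (n : ℕ) : Finset (Equiv.Perm (Fin n)) :=
  Finset.univ.filter (fun π => Avoids321 π)

/-- The value `π(i)` in one-based notation: positions `1,…,n`, values `1,…,n`. -/
def pval {n : ℕ} (π : Equiv.Perm (Fin n)) (i : ℕ) : ℕ :=
  if h : i - 1 < n then (π ⟨i - 1, h⟩ : ℕ) + 1 else 0

/-- The descent set `Des(π) = {1 ≤ i ≤ n-1 : π(i) > π(i+1)}` (one-based). -/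
def desSet {n : ℕ} (π : Equiv.Perm (Fin n)) : Finset ℕ :=
  (Finset.Icc 1 (n - 1)).filter (fun i => pval π (i + 1) < pval π i)

/-- The last descent of `π` (0 for the identity). -/
def ldes {n : ℕ} (π : Equiv.Perm (Fin n)) : ℕ := (desSet π).sup id

/-- `lind(π) = π⁻¹(n)`, the (one-based) position of the letter `n` in `π`. -/
def lind {n : ℕ} (π : Equiv.Perm (Fin n)) : ℕ := pval π.symm n

/-- The inversion number of `π`. -/
def invNum {n : ℕ} (π : Equiv.Perm (Fin n)) : ℕ :=
  (Finset.univ.filter (fun q : Fin n × Fin n => q.1 < q.2 ∧ π q.2 < π q.1)).card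

/-- A ±1 sequence of length `2n` (`true` = +1) is a Dyck path if it has `n` up
steps and every prefix has at least as many up steps as down steps. -/
def IsDyckPred (n : ℕ) (p : Fin (2 * n) → Bool) : Prop :=
  (Finset.univ.filter (fun i => p i = true)).card = n ∧
  ∀ k ≤ 2 * n,
    k ≤ 2 * (Finset.univ.filter (fun i : Fin (2 * n) => (i : ℕ) < k ∧ p i = true)).card

instance (n : ℕ) : DecidablePred (IsDyckPred n) := fun p => by
  unfold IsDyckPred; infer_instance

/-- The set `P_n` of Dyck paths of length `2n`. -/
def DyckPath (n : ℕ) : Type := { p : Fin (2 * n) → Bool // IsDyckPred n p }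

instance (n : ℕ) : Fintype (DyckPath n) := by unfold DyckPath; infer_instance

/-- The `i`-th step of the path, one-based; `true` = +1, `false` = -1. -/
def pstep {n : ℕ} (p : DyckPath n) (i : ℕ) : Bool :=
  if h : i - 1 < 2 * n then p.1 ⟨i - 1, h⟩ else false

/-- `Des(p) = {1 ≤ i ≤ n-1 : p_i = +1, p_{i+1} = -1}`. -/
def pathDes {n : ℕ} (p : DyckPath n) : Finset ℕ :=
  (Finset.Icc 1 (n - 1)).filter (fun i => pstep p i = true ∧ pstep p (i + 1) = false)

/-- `Des(p⁻¹) = {1 ≤ i ≤ n-1 : p_{2n-i} = +1, p_{2n-i+1} = -1}`. -/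
def pathDesInv {n : ℕ} (p : DyckPath n) : Finset ℕ :=
  (Finset.Icc 1 (n - 1)).filter
    (fun i => pstep p (2 * n - i) = true ∧ pstep p (2 * n - i + 1) = false)

/-- `ldes(p) = max{1 ≤ i ≤ n-1 : p_i = +1, p_{i+1} = -1}` (0 if none). -/
def pathLdes {n : ℕ} (p : DyckPath n) : ℕ := (pathDes p).sup id

/-- `lind(p) = max{1 ≤ i ≤ n : p_i = +1, p_{i+1} = -1}` (0 if none). -/
def pathLind {n : ℕ} (p : DyckPath n) : ℕ :=
  ((Finset.Icc 1 n).filter (fun i => pstep p i = true ∧ pstep p (i + 1) = false)).sup id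

/-- `tail(p) = 2n - max{i : p_i = +1, p_{i+1} = -1}`, the number of consecutive
down steps at the end of `p`. -/
def pathTail {n : ℕ} (p : DyckPath n) : ℕ :=
  2 * n -
    ((Finset.Icc 1 (2 * n - 1)).filter
      (fun i => pstep p i = true ∧ pstep p (i + 1) = false)).sup id

lemma pval_bounds {n : ℕ} (σ : Equiv.Perm (Fin n)) {p : ℕ} (hp1 : 1 ≤ p) (hpn : p ≤ n) :
    1 ≤ pval σ p ∧ pval σ p ≤ n := by
  have h : p - 1 < n := by omega
  have hlt := (σ ⟨p - 1, h⟩).is_lt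
  simp only [pval, dif_pos h]
  omega

lemma pval_inv_eq {n : ℕ} (σ : Equiv.Perm (Fin n)) {p v : ℕ}
    (hp1 : 1 ≤ p) (hpn : p ≤ n) (hv1 : 1 ≤ v) (hvn : v ≤ n)
    (h : pval σ p = v) : pval σ⁻¹ v = p := by
  have hp : p - 1 < n := by omega
  have hv : v - 1 < n := by omega
  simp only [pval, dif_pos hp] at h
  have hσ : σ ⟨p - 1, hp⟩ = ⟨v - 1, hv⟩ := Fin.ext (by simp; omega)
  have hinv : σ⁻¹ ⟨v - 1, hv⟩ = ⟨p - 1, hp⟩ := by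
    rw [← hσ]; exact Equiv.symm_apply_apply σ _
  simp only [pval, dif_pos hv, hinv]
  omega

lemma pval_apply_inv {n : ℕ} (σ : Equiv.Perm (Fin n)) {v : ℕ}
    (hv1 : 1 ≤ v) (hvn : v ≤ n) :
    1 ≤ pval σ⁻¹ v ∧ pval σ⁻¹ v ≤ n ∧ pval σ (pval σ⁻¹ v) = v := by
  obtain ⟨b1, b2⟩ := pval_bounds σ⁻¹ hv1 hvn
  refine ⟨b1, b2, ?_⟩
  have := pval_inv_eq σ⁻¹ hv1 hvn b1 b2 rfl
  rwa [inv_inv] at this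

theorem insert_desSet_inv (m k : ℕ) (hm : 1 ≤ m) (hk : k ≤ m)
    (π : Equiv.Perm (Fin m)) (hπ : Avoids321 π) (hld : ldes π ≤ k)
    (πb : Equiv.Perm (Fin (m + 1)))
    (h1 : ∀ i, 1 ≤ i → i ≤ k → pval πb i = pval π i)
    (h2 : pval πb (k + 1) = m + 1)
    (h3 : ∀ i, k + 2 ≤ i → i ≤ m + 1 → pval πb i = pval π (i - 1)) :
    (lind π ≤ k → desSet πb⁻¹ = desSet π⁻¹) ∧
      (k < lind π → desSet πb⁻¹ = desSet π⁻¹ ∪ {m}) := by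
  have hlind : lind π = pval π⁻¹ m := rfl
  obtain ⟨hl1, hl2, _⟩ := pval_apply_inv π hm le_rfl
  rw [← hlind] at hl1 hl2
  have key : ∀ v, 1 ≤ v → v ≤ m →
      pval πb⁻¹ v = if pval π⁻¹ v ≤ k then pval π⁻¹ v else pval π⁻¹ v + 1 := by
    intro v hv1 hvm
    obtain ⟨hp1, hpm, hpv⟩ := pval_apply_inv π hv1 hvm
    by_cases hpk : pval π⁻¹ v ≤ k
    · rw [if_pos hpk]
      exact pval_inv_eq πb hp1 (by omega) hv1 (by omega)
        (by rw [h1 _ hp1 hpk, hpv])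
    · rw [if_neg hpk]
      refine pval_inv_eq πb (by omega) (by omega) hv1 (by omega) ?_
      rw [h3 (pval π⁻¹ v + 1) (by omega) (by omega)]
      simpa using hpv
  have keytop : pval πb⁻¹ (m + 1) = k + 1 :=
    pval_inv_eq πb (by omega) (by omega) (by omega) (by omega) h2
  have keym := key m hm le_rfl
  rw [← hlind] at keym
  constructor
  · intro hle
    ext i
    simp only [desSet, Finset.mem_filter, Finset.mem_Icc, Nat.add_sub_cancel]
    constructor
    · rintro ⟨⟨hi1, him⟩, hdesc⟩
      by_cases hiM : i = m
      · exfalso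
        subst hiM
        rw [keytop, keym, if_pos hle] at hdesc
        omega
      · refine ⟨⟨hi1, by omega⟩, ?_⟩
        rw [key i hi1 (by omega), key (i + 1) (by omega) (by omega)] at hdesc
        split_ifs at hdesc <;> omega
    · rintro ⟨⟨hi1, him⟩, hdesc⟩
      refine ⟨⟨hi1, by omega⟩, ?_⟩
      rw [key i hi1 (by omega), key (i + 1) (by omega) (by omega)]
      split_ifs <;> omega
  · intro hlt
    ext i
    simp only [desSet, Finset.mem_filter, Finset.mem_Icc, Nat.add_sub_cancel,
      Finset.mem_union, Finset.mem_singleton]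
    constructor
    · rintro ⟨⟨hi1, him⟩, hdesc⟩
      by_cases hiM : i = m
      · exact Or.inr hiM
      · refine Or.inl ⟨⟨hi1, by omega⟩, ?_⟩
        rw [key i hi1 (by omega), key (i + 1) (by omega) (by omega)] at hdesc
        split_ifs at hdesc <;> omega
    · rintro (⟨⟨hi1, him⟩, hdesc⟩ | hiM)
      · refine ⟨⟨hi1, by omega⟩, ?_⟩
        rw [key i hi1 (by omega), key (i + 1) (by omega) (by omega)]
        split_ifs <;> omega
      · subst hiM
        refine ⟨⟨hm, le_rfl⟩, ?_⟩
        rw [keytop, keym, if_neg (by omega)]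
        omega
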